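/- Fix N, K ≥ 1, local model parameters θ_1, …, θ_N ∈ ℝ^n, and real constants c_{i,j} for i, j ∈ {1,…,N}. Let a = (a_{i,k}) ∈ {0,1}^{N×K} satisfy Σ_{k=1}^K a_{i,k} = 1 for every i and Σ_{i=1}^N a_{i,k} ≥ 1 for every k. For ε ≥ 0 define J_ε(a) = Σ_{k=1}^K Σ_{i=1}^N Σ_{j=1}^N (a_{i,k} · a_{j,k} / Σ_{j'=1}^N a_{j',k}) · (ε · √(‖θ_j‖₂² + 1) + c_{i,j}). Then J_ε(a) = ε · Σ_{j=1}^N √(‖θ_j‖₂² + 1) + J_0(a); in particular the ε-dependent part of the objective is a constant that does not depend on the assignment a. -/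

import Mathlib

/-- **Decomposition in the proof of Proposition 1 (CS-RCFL).** For a feasible coalition
assignment `a`, the objective with common radius `ε` equals the `ε`-independent objective
`J 0 a` plus the assignment-independent constant `ε · Σ_j √(‖θ j‖² + 1)`. -/
theorem objective_decomposition_common_radius
    {n N K : ℕ} (hN : 1 ≤ N) (hK : 1 ≤ K)
    (θ : Fin N → EuclideanSpace ℝ (Fin n))
    (c : Fin N → Fin N → ℝ)
    (a : Fin N → Fin K → ℕ)
    (ha01 : ∀ i k, a i k = 0 ∨ a i k = 1)
    (hasum : ∀ i, ∑ k, a i k = 1)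
    (hnonempty : ∀ k, 1 ≤ ∑ i, a i k)
    (J : ℝ → (Fin N → Fin K → ℕ) → ℝ)
    (hJ : ∀ ε b, J ε b = ∑ k, ∑ i, ∑ j,
        ((b i k : ℝ) * (b j k : ℝ) / ((∑ j', b j' k : ℕ) : ℝ)) *
          (ε * Real.sqrt (‖θ j‖ ^ 2 + 1) + c i j)) :
    ∀ ε : ℝ, 0 ≤ ε →
      J ε a = ε * (∑ j, Real.sqrt (‖θ j‖ ^ 2 + 1)) + J 0 a := by
  intro ε hε
  have hS : ∀ k : Fin K, ((∑ i, a i k : ℕ) : ℝ) ≠ 0 := by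
    intro k
    have := hnonempty k
    positivity
  rw [hJ, hJ]
  simp only [zero_mul, zero_add, mul_add, Finset.sum_add_distrib]
  congr 1
  -- show the ε-part equals ε * Σ_j √(‖θ j‖² + 1)
  have key : ∀ k : Fin K,
      (∑ i, ∑ j, ((a i k : ℝ) * (a j k : ℝ) / ((∑ j', a j' k : ℕ) : ℝ)) *
        (ε * Real.sqrt (‖θ j‖ ^ 2 + 1)))
      = ∑ j, (a j k : ℝ) * (ε * Real.sqrt (‖θ j‖ ^ 2 + 1)) := by
    intro k
    rw [Finset.sum_comm]
    refine Finset.sum_congr rfl fun j _ => ?_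
    have : (∑ i, ((a i k : ℝ) * (a j k : ℝ) / ((∑ j', a j' k : ℕ) : ℝ)) *
        (ε * Real.sqrt (‖θ j‖ ^ 2 + 1)))
        = (∑ i, (a i k : ℝ)) * ((a j k : ℝ) / ((∑ j', a j' k : ℕ) : ℝ) *
          (ε * Real.sqrt (‖θ j‖ ^ 2 + 1))) := by
      rw [Finset.sum_mul]
      refine Finset.sum_congr rfl fun i _ => ?_
      ring
    rw [this]
    have hcast : (∑ i, (a i k : ℝ)) = ((∑ i, a i k : ℕ) : ℝ) := by
      push_cast; ring
    rw [hcast]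
    field_simp
    rw [mul_assoc]
    exact mul_div_cancel_left₀ _ (hS k)
  calc (∑ k, ∑ i, ∑ j, ((a i k : ℝ) * (a j k : ℝ) / ((∑ j', a j' k : ℕ) : ℝ)) *
        (ε * Real.sqrt (‖θ j‖ ^ 2 + 1)))
      = ∑ k, ∑ j, (a j k : ℝ) * (ε * Real.sqrt (‖θ j‖ ^ 2 + 1)) := by
        exact Finset.sum_congr rfl fun k _ => key k
    _ = ∑ j, (∑ k, (a j k : ℝ)) * (ε * Real.sqrt (‖θ j‖ ^ 2 + 1)) := by
        rw [Finset.sum_comm]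
        exact Finset.sum_congr rfl fun j _ => (Finset.sum_mul ..).symm
    _ = ε * ∑ j, Real.sqrt (‖θ j‖ ^ 2 + 1) := by
        rw [Finset.mul_sum]
        refine Finset.sum_congr rfl fun j _ => ?_
        have : (∑ k, (a j k : ℝ)) = 1 := by
          have := hasum j; exact_mod_cast this
        rw [this]; ring
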